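/- For an odd cycle C_N with N = 2K+1 vertices, arrival rates α_1 = (ρ/K)/(1 + ρ/K) and α_i = (1/(2K))/(1 + ρ/K) for i ∈ {2, …, N}, with 0 < ρ < 1, satisfy the stability condition: for every nonempty independent set I of C_N, Σ_{i ∈ I} α_i < Σ_{j ∈ E(I)} α_j. -/

import Mathlib

open Finset

def IsIndep {V : Type*} (G : SimpleGraph V) (I : Finset V) : Prop :=
  ∀ i ∈ I, ∀ j ∈ I, ¬ G.Adj i j

def nbhd {V : Type*} [Fintype V] [DecidableEq V] (G : SimpleGraph V) [DecidableRel G.Adj]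
    (A : Finset V) : Finset V :=
  A.biUnion fun i => G.neighborFinset i

def cycleGraph (N : ℕ) : SimpleGraph (ZMod N) where
  Adj i j := i ≠ j ∧ (i + 1 = j ∨ j + 1 = i)
  symm := by
    constructor
    rintro i j ⟨h1, h2⟩
    exact ⟨h1.symm, h2.symm⟩
  loopless := by constructor; rintro i ⟨h1, _⟩; exact h1 rfl

lemma mem_nbhd_iff {V : Type*} [Fintype V] [DecidableEq V] (G : SimpleGraph V)
    [DecidableRel G.Adj] (A : Finset V) (j : V) :
    j ∈ nbhd G A ↔ ∃ i ∈ A, G.Adj i j := by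
  simp [nbhd]

lemma not_mem_nbhd {V : Type*} [Fintype V] [DecidableEq V] {G : SimpleGraph V}
    [DecidableRel G.Adj] {I : Finset V} (hind : IsIndep G I) {j : V} (hj : j ∈ I) :
    j ∉ nbhd G I := by
  intro hjn
  rw [mem_nbhd_iff] at hjn
  obtain ⟨i, hi, hadj⟩ := hjn
  exact hind i hi j hj hadj

lemma cycle_indep_card (K : ℕ) (hK : 1 ≤ K) [DecidableRel (cycleGraph (2 * K + 1)).Adj]
    {I : Finset (ZMod (2 * K + 1))} (hne : I.Nonempty)
    (hind : IsIndep (cycleGraph (2 * K + 1)) I) :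
    I.card + 1 ≤ (nbhd (cycleGraph (2 * K + 1)) I).card := by
  haveI : Fact (1 < 2 * K + 1) := ⟨by omega⟩
  have hone : (1 : ZMod (2 * K + 1)) ≠ 0 := one_ne_zero
  -- the shift map
  have hsub : I.image (· + 1) ⊆ nbhd (cycleGraph (2 * K + 1)) I := by
    intro j hj
    simp only [Finset.mem_image] at hj
    obtain ⟨i, hi, rfl⟩ := hj
    rw [mem_nbhd_iff]
    exact ⟨i, hi, left_ne_add.mpr hone, Or.inl rfl⟩
  have hcardimg : (I.image (· + 1)).card = I.card :=
    Finset.card_image_of_injective I (add_left_injective 1)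
  by_contra hcon
  push_neg at hcon
  have himg : I.image (· + 1) = nbhd (cycleGraph (2 * K + 1)) I :=
    Finset.eq_of_subset_of_card_le hsub (by omega)
  -- closure under subtracting 2
  have hclose : ∀ i ∈ I, i - 2 ∈ I := by
    intro i hi
    have h1 : i - 1 ∈ nbhd (cycleGraph (2 * K + 1)) I := by
      rw [mem_nbhd_iff]
      refine ⟨i, hi, ?_, Or.inr (by ring)⟩
      intro hc
      exact hone (sub_eq_self.mp hc.symm)
    rw [← himg, Finset.mem_image] at h1
    obtain ⟨j, hj, hj1⟩ := h1
    have : j = i - 2 := by linear_combination hj1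
    rwa [this] at hj
  have hiter : ∀ (m : ℕ), ∀ i ∈ I, i - 2 * (m : ZMod (2 * K + 1)) ∈ I := by
    intro m
    induction m with
    | zero => intro i hi; simpa using hi
    | succ m ih =>
      intro i hi
      have h2 := hclose _ (ih i hi)
      have he : i - 2 * ((m + 1 : ℕ) : ZMod (2 * K + 1)) = (i - 2 * (m : ℕ)) - 2 := by
        push_cast; ring
      rw [he]
      exact h2
  obtain ⟨i0, hi0⟩ := hne
  have h2K : (2 : ZMod (2 * K + 1)) * ((K : ZMod (2 * K + 1)) + 1) = 1 := by
    have h0 : ((2 * K + 1 : ℕ) : ZMod (2 * K + 1)) = 0 := ZMod.natCast_self _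
    push_cast at h0
    linear_combination h0
  have huniv : ∀ t : ZMod (2 * K + 1), t ∈ I := by
    intro t
    set m : ℕ := ((i0 - t) * ((K : ZMod (2 * K + 1)) + 1)).val with hm
    have hmval : ((m : ℕ) : ZMod (2 * K + 1)) = (i0 - t) * ((K : ZMod (2 * K + 1)) + 1) := by
      simp [hm, ZMod.natCast_val, ZMod.cast_id]
    have ht : i0 - 2 * ((m : ℕ) : ZMod (2 * K + 1)) = t := by
      rw [hmval]
      linear_combination (t - i0) * h2K
    have := hiter m i0 hi0
    rwa [ht] at this
  exact hind 0 (huniv 0) 1 (huniv 1) ⟨zero_ne_one, Or.inl (zero_add 1)⟩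

/-- The arrival rates `α_1 = (ρ/K)/(1 + ρ/K)`, `α_i = (1/(2K))/(1 + ρ/K)` for `i ≠ 1`,
with `0 < ρ < 1`, satisfy the stability condition on the odd cycle `C_{2K+1}`. -/
theorem stmt3 (K : ℕ) (hK : 1 ≤ K)
    [DecidableRel (cycleGraph (2 * K + 1)).Adj]
    (ρ : ℝ) (hρ0 : 0 < ρ) (hρ1 : ρ < 1)
    (α : ZMod (2 * K + 1) → ℝ)
    (hα : ∀ i, α i = if i = 1 then (ρ / K) / (1 + ρ / K)
                     else (1 / (2 * K)) / (1 + ρ / K)) :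
    ∀ I : Finset (ZMod (2 * K + 1)), I.Nonempty → IsIndep (cycleGraph (2 * K + 1)) I →
      ∑ i ∈ I, α i < ∑ j ∈ nbhd (cycleGraph (2 * K + 1)) I, α j := by
  intro I hne hind
  have hcard := cycle_indep_card K hK hne hind
  have hKpos : (0 : ℝ) < K := by exact_mod_cast Nat.lt_of_lt_of_le Nat.zero_lt_one hK
  have hd : (0 : ℝ) < 1 + ρ / K := by positivity
  obtain ⟨a, b, ha, hb, hab, hαab⟩ :
      ∃ a b : ℝ, 0 < a ∧ 0 < b ∧ a < 2 * b ∧ ∀ i, α i = if i = 1 then a else b := by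
    refine ⟨_, _, ?_, ?_, ?_, hα⟩
    · positivity
    · positivity
    · have h2b : 2 * ((1 / (2 * (K : ℝ))) / (1 + ρ / K)) = (1 / K) / (1 + ρ / K) := by
        field_simp
      rw [h2b]
      have hx : ρ / (K : ℝ) < 1 / K := by
        rw [div_lt_div_iff₀ hKpos hKpos]
        nlinarith
      rw [div_lt_div_iff₀ hd hd]
      nlinarith
  have hsum : ∀ S : Finset (ZMod (2 * K + 1)), ∑ i ∈ S, α i
      = S.card * b + (if (1 : ZMod (2 * K + 1)) ∈ S then a - b else 0) := by
    intro S
    have h1 : ∀ i ∈ S, α i = b + (if i = 1 then a - b else 0) := by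
      intro i _
      rw [hαab]
      by_cases h : i = 1 <;> simp [h]
    rw [Finset.sum_congr rfl h1, Finset.sum_add_distrib, Finset.sum_const,
      Finset.sum_ite_eq' S 1 fun _ => a - b, nsmul_eq_mul]
  rw [hsum I, hsum (nbhd (cycleGraph (2 * K + 1)) I)]
  have hm : ((I.card : ℝ) + 1) ≤ ((nbhd (cycleGraph (2 * K + 1)) I).card : ℝ) := by
    exact_mod_cast hcard
  have hprod : ((I.card : ℝ) + 1) * b ≤ ((nbhd (cycleGraph (2 * K + 1)) I).card : ℝ) * b :=
    mul_le_mul_of_nonneg_right hm hb.le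
  by_cases h1I : (1 : ZMod (2 * K + 1)) ∈ I
  · rw [if_pos h1I, if_neg (not_mem_nbhd hind h1I)]
    linarith
  · by_cases h1E : (1 : ZMod (2 * K + 1)) ∈ nbhd (cycleGraph (2 * K + 1)) I
    · rw [if_neg h1I, if_pos h1E]
      linarith
    · rw [if_neg h1I, if_neg h1E]
      linarith
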